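/- arXiv:1205.1248 — 6 statements merged into one kernel-verified Lean document; each statement's English description precedes it below -/
import Mathlib

section
/- Let d be the discriminant of a list of integers (determinant of the associated tridiagonal matrix). For any list A of length r > 1, writing Ā for A with the first entry removed and A̲ for A with the last entry removed, one has d(Ā) * d(A̲) - d(A) * d(Ā̲) = 1, where Ā̲ is A with both the first and last entry removed. -/
/-- Discriminant of a linear chain: determinant of the tridiagonal matrix. -/
def chainD : List ℤ → ℤ
  | [] => 1
  | [a] => a
  | a :: b :: L => a * chainD (b :: L) - chainD L

/-- A list is admissible if it is nonempty and all entries are at least 2. -/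
def Admissible (A : List ℤ) : Prop := A ≠ [] ∧ ∀ x ∈ A, 2 ≤ x

/-- Inductance e(A) = d(Ā)/d(A). -/
def inductance (A : List ℤ) : ℚ := (chainD A.tail : ℚ) / (chainD A : ℚ)

/-- Plumbing concatenation ⋆ of linear chains. -/
def pstar : List ℤ → List ℤ → List ℤ
  | [], B => B
  | A, [] => A
  | [a], b :: B => (a + b - 1) :: B
  | a :: A, B => a :: pstar A B

/-- TW n : the list of n copies of 2. -/
def TW (n : ℕ) : List ℤ := List.replicate n 2

theorem chainD_tail_dropLast (A : List ℤ) (h : 1 < A.length) :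
    chainD A.tail * chainD A.dropLast - chainD A * chainD A.tail.dropLast = 1 := by
  match A, h with
  | [a, b], _ => simp [chainD]; ring
  | a :: b :: c :: L, _ =>
    have ih := chainD_tail_dropLast (b :: c :: L) (by simp)
    simp only [List.tail_cons, List.dropLast_cons₂, chainD] at ih ⊢
    nlinarith [ih]
end

section
/- If A = [a_1, ..., a_r] is a nonempty list of integers with every a_i ≥ 2, then gcd(d(A), d(Ā)) = 1 and d(A) > d(Ā) > 0, where Ā = [a_2, ..., a_r] and d is the discriminant of the list. -/
theorem chainD_admissible (A : List ℤ) (hA : Admissible A) :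
    Int.gcd (chainD A) (chainD A.tail) = 1 ∧
    chainD A.tail < chainD A ∧ 0 < chainD A.tail := by
  obtain ⟨hne, hall⟩ := hA
  induction A with
  | nil => exact absurd rfl hne
  | cons a A ih =>
    have ha : 2 ≤ a := hall a (List.mem_cons_self)
    cases A with
    | nil =>
      simp [chainD]
      omega
    | cons b L =>
      obtain ⟨hg, hlt, hpos⟩ := ih (by simp) (fun x hx => hall x (List.mem_cons_of_mem a hx))
      simp only [List.tail_cons] at hg hlt hpos
      have hd : chainD (a :: b :: L) = a * chainD (b :: L) - chainD L := rfl
      refine ⟨?_, ?_, ?_⟩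
      · show Int.gcd (a * chainD (b :: L) - chainD L) (chainD (b :: L)) = 1
        rw [← Int.isCoprime_iff_gcd_eq_one] at hg ⊢
        rw [show a * chainD (b :: L) - chainD L = -chainD L + chainD (b :: L) * a by ring]
        exact (hg.neg_right.add_mul_left_right a).symm
      · show chainD (b :: L) < a * chainD (b :: L) - chainD L
        nlinarith
      · exact lt_trans hpos hlt
end

section
/- The inductance function e, from the set of admissible lists of integers to the rational numbers in the open interval (0,1), given by e(A) = d(Ā)/d(A), is injective. -/
lemma chainD_bounds : ∀ (L : List ℤ), (∀ x ∈ L, 2 ≤ x) →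
    1 ≤ chainD L ∧ (L ≠ [] → chainD L.tail < chainD L) := by
  intro L
  induction L using chainD.induct with
  | case1 => intro _; simp [chainD]
  | case2 a =>
      intro h
      have ha : 2 ≤ a := h a (by simp)
      constructor
      · simpa [chainD] using by omega
      · intro _; simp [chainD]; omega
  | case3 a b L ih =>
      intro h
      have ha : 2 ≤ a := h a (by simp)
      obtain ⟨h1, h2⟩ := ih (fun x hx => h x (by simp [hx]))
      have h3 : chainD L < chainD (b :: L) := h2 (by simp)
      constructor
      · simp only [chainD]; nlinarith
      · intro _
        show chainD (b :: L) < chainD (a :: b :: L)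
        simp only [chainD]; nlinarith

lemma inductance_mem (A : List ℤ) (hA : Admissible A) :
    0 < inductance A ∧ inductance A < 1 := by
  obtain ⟨hne, h2⟩ := hA
  obtain ⟨h1, hlt⟩ := chainD_bounds A h2
  have htail : 1 ≤ chainD A.tail := by
    rcases A with _ | ⟨a, L⟩
    · simp [chainD]
    · exact (chainD_bounds L (fun x hx => h2 x (by simp [hx]))).1
  have hlt' := hlt hne
  have hApos : (0:ℚ) < (chainD A : ℚ) := by exact_mod_cast lt_of_le_of_lt (by linarith) hlt'
  constructor
  · exact div_pos (by exact_mod_cast htail) hApos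
  · rw [inductance, div_lt_one hApos]; exact_mod_cast hlt'

/-- auxiliary: 0 for empty list, inductance otherwise -/
noncomputable def ind' (L : List ℤ) : ℚ := if L = [] then 0 else inductance L

lemma inductance_cons (a : ℤ) (L : List ℤ) (h2 : ∀ x ∈ a :: L, 2 ≤ x) :
    inductance (a :: L) = 1 / ((a : ℚ) - ind' L) := by
  rcases L with _ | ⟨b, M⟩
  · simp [inductance, ind', chainD]
  · have h2' : ∀ x ∈ b :: M, 2 ≤ x := fun x hx => h2 x (by simp [hx])
    have h1 : 1 ≤ chainD (b :: M) := (chainD_bounds (b :: M) h2').1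
    have hD : 1 ≤ chainD (a :: b :: M) := (chainD_bounds (a :: b :: M) h2).1
    have hne : (chainD (b :: M) : ℚ) ≠ 0 := by exact_mod_cast by omega
    have hDne : (chainD (a :: b :: M) : ℚ) ≠ 0 := by exact_mod_cast by omega
    have hcons : chainD (a :: b :: M) = a * chainD (b :: M) - chainD M := rfl
    have key : (a : ℚ) - ind' (b :: M)
        = (chainD (a :: b :: M) : ℚ) / (chainD (b :: M) : ℚ) := by
      simp only [ind', if_neg (by simp : (b :: M) ≠ []), inductance, List.tail_cons]
      rw [hcons]
      push_cast
      field_simp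
    rw [key, one_div_div]
    simp [inductance]

lemma ind'_mem (L : List ℤ) (h2 : ∀ x ∈ L, 2 ≤ x) : 0 ≤ ind' L ∧ ind' L < 1 := by
  rcases eq_or_ne L [] with rfl | hne
  · simp [ind']
  · have := inductance_mem L ⟨hne, h2⟩
    simp only [ind', if_neg hne]
    exact ⟨le_of_lt this.1, this.2⟩

theorem inductance_injective (A B : List ℤ) (hA : Admissible A) (hB : Admissible B)
    (h : inductance A = inductance B) : A = B := by
  induction A generalizing B with
  | nil => exact absurd rfl hA.1
  | cons a A' IH =>
      obtain ⟨b, B', rfl⟩ : ∃ b B', B = b :: B' := by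
        rcases B with _ | ⟨b, B'⟩
        · exact absurd rfl hB.1
        · exact ⟨b, B', rfl⟩
      have hA2 : ∀ x ∈ A', 2 ≤ x := fun x hx => hA.2 x (by simp [hx])
      have hB2 : ∀ x ∈ B', 2 ≤ x := fun x hx => hB.2 x (by simp [hx])
      have ha : 2 ≤ a := hA.2 a (by simp)
      have hb : 2 ≤ b := hB.2 b (by simp)
      obtain ⟨htA0, htA1⟩ := ind'_mem A' hA2
      obtain ⟨htB0, htB1⟩ := ind'_mem B' hB2
      rw [inductance_cons a A' hA.2, inductance_cons b B' hB.2] at h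
      have hda : (0:ℚ) < (a:ℚ) - ind' A' := by
        have : (2:ℚ) ≤ (a:ℚ) := by exact_mod_cast ha
        linarith
      have hdb : (0:ℚ) < (b:ℚ) - ind' B' := by
        have : (2:ℚ) ≤ (b:ℚ) := by exact_mod_cast hb
        linarith
      have heq : (a:ℚ) - ind' A' = (b:ℚ) - ind' B' := by
        field_simp at h
        linarith [h]
      have hab : a = b := by
        have h1 : ((a:ℚ) - b : ℚ) = ind' A' - ind' B' := by linarith
        have h2 : |((a - b : ℤ) : ℚ)| < 1 := by
          rw [abs_lt]; push_cast; constructor <;> linarith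
        have h3 : |a - b| < 1 := by exact_mod_cast h2
        have := abs_lt.mp h3
        omega
      subst hab
      have hts : ind' A' = ind' B' := by linarith
      rcases eq_or_ne A' [] with rfl | hA'ne
      · rcases eq_or_ne B' [] with rfl | hB'ne
        · rfl
        · exfalso
          have := (inductance_mem B' ⟨hB'ne, hB2⟩).1
          simp [ind', hB'ne] at hts
          linarith
      · have hB'ne : B' ≠ [] := by
          rintro rfl
          have := (inductance_mem A' ⟨hA'ne, hA2⟩).1
          simp [ind', hA'ne] at hts
          linarith
        have : inductance A' = inductance B' := by
          simpa [ind', hA'ne, hB'ne] using hts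
        rw [IH B' ⟨hA'ne, hA2⟩ ⟨hB'ne, hB2⟩ this]
end

section
/- The inductance function e, from the set of admissible lists of integers to the rational numbers in the open interval (0,1), given by e(A) = d(Ā)/d(A), is surjective: for every rational q with 0 < q < 1 there exists an admissible list A with e(A) = q. -/
lemma chainD_cons (a : ℤ) (B : List ℤ) (hB : B ≠ []) :
    chainD (a :: B) = a * chainD B - chainD B.tail := by
  cases B with
  | nil => exact absurd rfl hB
  | cons b L => rfl

lemma aux : ∀ n : ℕ, ∀ q : ℚ, q.den ≤ n → 0 < q → q < 1 →
    ∃ A : List ℤ, Admissible A ∧ inductance A = q := by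
  intro n
  induction n with
  | zero => intro q hd _ _; exact absurd (lt_of_lt_of_le q.pos hd) (lt_irrefl 0)
  | succ n ih =>
    intro q hd h0 h1
    set p : ℤ := q.num with hp
    set d : ℕ := q.den with hdq
    have hp1 : 1 ≤ p := Rat.num_pos.mpr h0
    have hqeq : (p : ℚ) / (d : ℚ) = q := Rat.num_div_den q
    have hpQ : (0 : ℚ) < (p : ℚ) := by exact_mod_cast hp1.trans_lt' (by norm_num)
    have hdQ : (0 : ℚ) < (d : ℚ) := by exact_mod_cast q.pos
    have hpd : p < (d : ℤ) := by
      have h : (p : ℚ) / (d : ℚ) < 1 := hqeq ▸ h1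
      have : (p : ℚ) < (d : ℚ) := (div_lt_one hdQ).mp h
      exact_mod_cast this
    rcases eq_or_lt_of_le hp1 with h1p | h2p
    · -- p = 1 : A = [d]
      refine ⟨[(d : ℤ)], ⟨by simp, ?_⟩, ?_⟩
      · intro x hx
        simp only [List.mem_singleton] at hx
        subst hx; omega
      · show (chainD [] : ℚ) / (chainD [(d:ℤ)] : ℚ) = q
        rw [← hqeq, ← h1p]
        simp [chainD]
    · -- p ≥ 2
      set a : ℤ := ⌈(d : ℚ) / (p : ℚ)⌉ with ha
      have hnotdvd : ¬ (p ∣ (d : ℤ)) := by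
        intro hdvd
        have hco : Nat.Coprime p.natAbs d := q.reduced
        have : p.natAbs ∣ d := by simpa using Int.natAbs_dvd_natAbs.mpr hdvd
        have := Nat.Coprime.eq_one_of_dvd hco this
        omega
      have hne : (d : ℚ) / (p : ℚ) ≠ (a : ℚ) := by
        intro heq
        apply hnotdvd
        have : (d : ℚ) = (a : ℚ) * (p : ℚ) := by
          field_simp at heq; linarith
        exact ⟨a, by exact_mod_cast this.trans (mul_comm _ _)⟩
      have hlt : (d : ℚ) / (p : ℚ) < (a : ℚ) := lt_of_le_of_ne (Int.le_ceil _) hne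
      have hgt : (a : ℚ) < (d : ℚ) / (p : ℚ) + 1 := Int.ceil_lt_add_one _
      have ha2 : 2 ≤ a := by
        have h1lt : (1 : ℚ) < (d : ℚ) / (p : ℚ) := (one_lt_div hpQ).mpr (by exact_mod_cast hpd)
        have : (1 : ℤ) < a := Int.lt_ceil.mpr (by exact_mod_cast h1lt)
        omega
      set q' : ℚ := ((a * p - d : ℤ) : ℚ) / ((p : ℤ) : ℚ) with hq'
      have hq'eq : q' = (a : ℚ) - (d : ℚ) / (p : ℚ) := by
        rw [hq']; push_cast; field_simp
      have hq'0 : 0 < q' := by rw [hq'eq]; linarith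
      have hq'1 : q' < 1 := by rw [hq'eq]; linarith
      have hq'den : q'.den ≤ n := by
        have hdvd : (q'.den : ℤ) ∣ p := by
          rw [hq', ← Rat.divInt_eq_div]; exact Rat.den_dvd _ _
        have hle : (q'.den : ℤ) ≤ p := Int.le_of_dvd (by omega) hdvd
        omega
      obtain ⟨B, hBadm, hBe⟩ := ih q' hq'den hq'0 hq'1
      refine ⟨a :: B, ⟨by simp, ?_⟩, ?_⟩
      · intro x hx
        rcases List.mem_cons.mp hx with h | h
        · subst h; exact ha2
        · exact hBadm.2 x h
      · set x : ℚ := (chainD B : ℚ) with hx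
        set y : ℚ := (chainD B.tail : ℚ) with hy
        have hxne : x ≠ 0 := by
          intro h
          rw [inductance, ← hy, ← hx, h, div_zero] at hBe
          exact absurd hBe.symm (ne_of_gt hq'0)
        have hyx : y = q' * x := by
          rw [← hBe, inductance, ← hy, ← hx, div_mul_cancel₀ _ hxne]
        have hch : (chainD (a :: B) : ℚ) = a * x - y := by
          rw [chainD_cons a B hBadm.1]; push_cast; ring
        have hkey : (a : ℚ) * x - y = ((d : ℚ) / (p : ℚ)) * x := by
          rw [hyx, hq'eq]; ring
        show (chainD (a :: B).tail : ℚ) / (chainD (a :: B) : ℚ) = q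
        simp only [List.tail_cons]
        rw [← hx, hch, hkey, ← hqeq]
        rw [div_eq_div_iff (by positivity) (by positivity)]
        field_simp

theorem inductance_surjective (q : ℚ) (h0 : 0 < q) (h1 : q < 1) :
    ∃ A : List ℤ, Admissible A ∧ inductance A = q :=
  aux q.den q le_rfl h0 h1
end

section
/- If A and B are admissible lists of integers with e(A) + e(B) = 1, then d(A) = d(B) and moreover e(A.reverse) + e(B.reverse) = 1. -/
/-- the 2x2 matrix product of the matrices [[a,-1],[1,0]]. -/
def cm : List ℤ → ℤ × ℤ × ℤ × ℤ
  | [] => (1, 0, 0, 1)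
  | a :: L => (a * (cm L).1 - (cm L).2.2.1, a * (cm L).2.1 - (cm L).2.2.2, (cm L).1, (cm L).2.1)

lemma cm_fst : ∀ A, (cm A).1 = chainD A := by
  intro A
  induction A using chainD.induct with
  | case1 => simp [cm, chainD]
  | case2 a => simp [cm, chainD]
  | case3 a b L ih1 ih2 => simp [cm, chainD, ← ih1, ← ih2]

lemma cm_det : ∀ A, (cm A).1 * (cm A).2.2.2 - (cm A).2.1 * (cm A).2.2.1 = 1 := by
  intro A
  induction A with
  | nil => simp [cm]
  | cons a L ih => simp only [cm]; ring_nf; ring_nf at ih; linarith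

lemma cm_append (X Y : List ℤ) : cm (X ++ Y) =
    ((cm X).1 * (cm Y).1 + (cm X).2.1 * (cm Y).2.2.1,
     (cm X).1 * (cm Y).2.1 + (cm X).2.1 * (cm Y).2.2.2,
     (cm X).2.2.1 * (cm Y).1 + (cm X).2.2.2 * (cm Y).2.2.1,
     (cm X).2.2.1 * (cm Y).2.1 + (cm X).2.2.2 * (cm Y).2.2.2) := by
  induction X with
  | nil => simp [cm]
  | cons a L ih =>
      simp only [List.cons_append, cm, List.append_eq, ih, Prod.ext_iff]
      refine ⟨by ring, by ring, trivial⟩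

lemma cm_reverse : ∀ A : List ℤ, cm A.reverse =
    ((cm A).1, -(cm A).2.2.1, -(cm A).2.1, (cm A).2.2.2) := by
  intro A
  induction A with
  | nil => simp [cm]
  | cons a L ih =>
      rw [List.reverse_cons, cm_append, ih]
      simp only [cm, Prod.ext_iff]
      refine ⟨by ring, by ring, by ring, by ring⟩

lemma cm_r (a : ℤ) (L : List ℤ) : (cm (a :: L)).2.2.1 = chainD L := by
  simp [cm, cm_fst]

lemma chainD_reverse (A : List ℤ) : chainD A.reverse = chainD A := by
  rw [← cm_fst, cm_reverse, cm_fst]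

lemma cm_r' (A : List ℤ) (hA : A ≠ []) : (cm A).2.2.1 = chainD A.tail := by
  cases A with
  | nil => exact absurd rfl hA
  | cons a L => exact cm_r a L

lemma cm_q (A : List ℤ) (hA : A ≠ []) : (cm A).2.1 = -chainD A.dropLast := by
  have h : (cm A.reverse).2.2.1 = -(cm A).2.1 := by rw [cm_reverse]
  rw [cm_r' _ (by simpa using hA), List.tail_reverse, chainD_reverse] at h
  linarith

lemma key_det (A : List ℤ) (hA : A ≠ []) :
    chainD A ∣ chainD A.tail * chainD A.dropLast - 1 := by
  have h := cm_det A
  obtain ⟨a, L, rfl⟩ := List.exists_cons_of_ne_nil hA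
  rw [cm_fst, cm_r, cm_q _ hA] at h
  refine ⟨-(cm (a :: L)).2.2.2, ?_⟩
  simp only [List.tail_cons]
  linear_combination h

lemma tail_bounds : ∀ A : List ℤ, Admissible A →
    1 ≤ chainD A.tail ∧ chainD A.tail < chainD A := by
  intro A
  induction A using chainD.induct with
  | case1 => intro h; exact absurd rfl h.1
  | case2 a =>
      intro h
      have ha := h.2 a (by simp)
      have h1 : chainD ([a] : List ℤ).tail = 1 := rfl
      have h2 : chainD [a] = a := rfl
      omega
  | case3 a b L ih1 ih2 =>
      intro h
      have ha : 2 ≤ a := h.2 a (by simp)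
      have hadm : Admissible (b :: L) := ⟨by simp, fun x hx => h.2 x (by simp [hx])⟩
      obtain ⟨h1, h2⟩ := ih1 hadm
      simp only [List.tail_cons] at h1 h2 ⊢
      have h3 : chainD (a :: b :: L) = a * chainD (b :: L) - chainD L := by
        simp [chainD]
      constructor
      · omega
      · rw [h3]; nlinarith [h1, h2, ha]

lemma admissible_reverse {A : List ℤ} (hA : Admissible A) : Admissible A.reverse :=
  ⟨by simpa using hA.1, fun x hx => hA.2 x (by simpa using hx)⟩

lemma dropLast_bounds (A : List ℤ) (hA : Admissible A) :
    1 ≤ chainD A.dropLast ∧ chainD A.dropLast < chainD A := by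
  have h := tail_bounds A.reverse (admissible_reverse hA)
  rwa [List.tail_reverse, chainD_reverse, chainD_reverse] at h

lemma arith_key (a b a' b' a'' b'' : ℤ)
    (ha'1 : 1 ≤ a') (ha'2 : a' < a) (hb'1 : 1 ≤ b') (hb'2 : b' < b)
    (ha''1 : 1 ≤ a'') (ha''2 : a'' < a) (hb''1 : 1 ≤ b'') (hb''2 : b'' < b)
    (hdA : a ∣ a' * a'' - 1) (hdB : b ∣ b' * b'' - 1)
    (hab : a' * b + b' * a = a * b) :
    a = b ∧ a'' + b'' = a := by
  have ha0 : 0 < a := by omega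
  have hb0 : 0 < b := by omega
  have h2 : a ∣ a' * b := ⟨b - b', by linarith⟩
  have h2' : b ∣ b' * a := ⟨a - a', by linarith⟩
  have hdvd1 : a ∣ b := by
    have hh := (h2.mul_left a'').sub (hdA.mul_right b)
    have he : a'' * (a' * b) - (a' * a'' - 1) * b = b := by ring
    rwa [he] at hh
  have hdvd2 : b ∣ a := by
    have hh := (h2'.mul_left b'').sub (hdB.mul_right a)
    have he : b'' * (b' * a) - (b' * b'' - 1) * a = a := by ring
    rwa [he] at hh
  have heq : a = b := Int.dvd_antisymm ha0.le hb0.le hdvd1 hdvd2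
  subst heq
  refine ⟨rfl, ?_⟩
  have hsum : a' + b' = a := by
    have hh : (a' + b') * a = a * a := by linarith
    exact mul_right_cancel₀ ha0.ne' hh
  have h3 : a ∣ a' * (a'' + b'') := by
    have he : a' * (a'' + b'') =
        ((a' * a'' - 1) - (b' * b'' - 1) + a * b'') + b'' * ((a' + b') - a) := by ring
    rw [he, show (a' + b') - a = 0 by omega]
    simp only [mul_zero, add_zero]
    exact dvd_add (hdA.sub hdB) (dvd_mul_right a b'')
  have h4 : a ∣ a'' + b'' := by
    have hh := (h3.mul_left a'').sub (hdA.mul_right (a'' + b''))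
    have he : a'' * (a' * (a'' + b'')) - (a' * a'' - 1) * (a'' + b'') = a'' + b'' := by ring
    rwa [he] at hh
  obtain ⟨k, hk⟩ := h4
  have hk1 : k = 1 := by
    have hl : 0 < a * k := by omega
    have hu : a * k < 2 * a := by omega
    nlinarith
  rw [hk1, mul_one] at hk
  omega

theorem inductance_add_eq_one (A B : List ℤ) (hA : Admissible A) (hB : Admissible B)
    (h : inductance A + inductance B = 1) :
    chainD A = chainD B ∧ inductance A.reverse + inductance B.reverse = 1 := by
  obtain ⟨ha'1, ha'2⟩ := tail_bounds A hA
  obtain ⟨hb'1, hb'2⟩ := tail_bounds B hB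
  obtain ⟨ha''1, ha''2⟩ := dropLast_bounds A hA
  obtain ⟨hb''1, hb''2⟩ := dropLast_bounds B hB
  have ha0 : (0:ℤ) < chainD A := by omega
  have hb0 : (0:ℤ) < chainD B := by omega
  have haq : ((chainD A : ℤ) : ℚ) ≠ 0 := by exact_mod_cast ha0.ne'
  have hbq : ((chainD B : ℤ) : ℚ) ≠ 0 := by exact_mod_cast hb0.ne'
  have hab : chainD A.tail * chainD B + chainD B.tail * chainD A = chainD A * chainD B := by
    have hq : ((chainD A.tail * chainD B + chainD B.tail * chainD A : ℤ) : ℚ)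
        = ((chainD A * chainD B : ℤ) : ℚ) := by
      push_cast
      simp only [inductance] at h
      field_simp at h
      linarith
    exact_mod_cast hq
  obtain ⟨heq, hsum⟩ := arith_key (chainD A) (chainD B) (chainD A.tail) (chainD B.tail)
    (chainD A.dropLast) (chainD B.dropLast) ha'1 ha'2 hb'1 hb'2 ha''1 ha''2 hb''1 hb''2
    (key_det A hA.1) (key_det B hB.1) hab
  refine ⟨heq, ?_⟩
  have hAr : inductance A.reverse = (chainD A.dropLast : ℚ) / (chainD A : ℚ) := by
    rw [inductance, List.tail_reverse, chainD_reverse, chainD_reverse]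
  have hBr : inductance B.reverse = (chainD B.dropLast : ℚ) / (chainD A : ℚ) := by
    rw [inductance, List.tail_reverse, chainD_reverse, chainD_reverse, ← heq]
  rw [hAr, hBr, ← add_div]
  rw [show ((chainD A.dropLast : ℚ) + (chainD B.dropLast : ℚ)) = ((chainD A : ℤ) : ℚ) by
    exact_mod_cast congrArg (Int.cast : ℤ → ℚ) hsum]
  exact div_self haq
end

section
/- For every admissible list A of integers, d(A) = d(overline{A*}) + d(underline{A}), where overline{A*} is the adjoint A* with its first entry removed and underline{A} is A with its last entry removed. -/
def gD (L : List ℤ) : ℤ := if L = [] then 0 else chainD L.dropLast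

theorem chainD_snoc (a : ℤ) : ∀ L : List ℤ, chainD (L ++ [a]) = a * chainD L - gD L
  | [] => by simp [chainD, gD]
  | [b] => by simp [chainD, gD]; ring
  | [b, c] => by simp [chainD, gD]; ring
  | b :: c :: d :: L => by
    have h1 := chainD_snoc a (c :: d :: L)
    have h2 := chainD_snoc a (d :: L)
    simp only [List.cons_append] at *
    rw [chainD, h1, h2]
    simp only [gD, if_neg (List.cons_ne_nil _ _), List.dropLast]
    cases L with
    | nil => simp [chainD]; ring
    | cons e L' =>
      simp only [List.dropLast, List.cons_ne_nil, ite_false, chainD]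
      ring

theorem dropLast_reverse (l : List ℤ) : l.reverse.dropLast = l.tail.reverse := by
  have := List.tail_reverse (l := l.reverse)
  rw [List.reverse_reverse] at this
  rw [this, List.reverse_reverse]

theorem chainD_reverse_s9 : ∀ L : List ℤ, chainD L.reverse = chainD L
  | [] => rfl
  | a :: M => by
    have h1 := chainD_reverse_s9 M
    have h2 := chainD_reverse_s9 M.tail
    rw [List.reverse_cons, chainD_snoc, h1]
    cases M with
    | nil => simp [chainD, gD]
    | cons b M' =>
      simp only [gD, if_neg (by simp : (b :: M').reverse ≠ [])]
      rw [dropLast_reverse, h2]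
      rw [chainD]
      rfl
  termination_by L => L.length
  decreasing_by all_goals (simp; try omega)

theorem chainD_mono : ∀ L : List ℤ, (∀ x ∈ L, 2 ≤ x) →
    L = [] ∨ (0 ≤ chainD L.tail ∧ chainD L.tail < chainD L)
  | [], _ => Or.inl rfl
  | [a], h => by
    right
    simp only [List.tail_cons, chainD]
    have := h a (by simp)
    constructor <;> omega
  | a :: b :: L, h => by
    right
    rcases chainD_mono (b :: L) (fun x hx => h x (List.mem_cons_of_mem a hx)) with h' | h'
    · exact absurd h' (by simp)
    simp only [List.tail_cons] at h' ⊢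
    have ha := h a (by simp)
    rw [chainD]
    constructor
    · omega
    · nlinarith

theorem chainD_coprime : ∀ L : List ℤ, IsCoprime (chainD L) (chainD L.tail)
  | [] => by simp [chainD]; exact isCoprime_one_left
  | [a] => by simp [chainD]; exact isCoprime_one_right
  | a :: b :: L => by
    have ih := chainD_coprime (b :: L)
    simp only [List.tail_cons] at ih ⊢
    rw [chainD]
    have : a * chainD (b :: L) - chainD L = -chainD L + chainD (b :: L) * a := by ring
    rw [this]
    exact ((ih.symm.neg_left).add_mul_left_left a)

theorem chainD_eq_adjoint_tail_add_dropLast (A As : List ℤ) (hA : Admissible A)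
    (hAs : Admissible As) (h : inductance As = 1 - inductance A.reverse) :
    chainD A = chainD As.tail + chainD A.dropLast := by
  obtain ⟨hAne, hA2⟩ := hA
  obtain ⟨hAsne, hAs2⟩ := hAs
  set dA := chainD A with hdA
  set dAs := chainD As with hdAs
  set dAs' := chainD As.tail with hdAs'
  set dL := chainD A.dropLast with hdL
  -- positivity
  have hmono := (chainD_mono A hA2).resolve_left hAne
  have hmonos := (chainD_mono As hAs2).resolve_left hAsne
  have hrev2 : (∀ x ∈ A.reverse, 2 ≤ x) := fun x hx => hA2 x (List.mem_reverse.mp hx)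
  have hmonor := (chainD_mono A.reverse hrev2).resolve_left (by simp [hAne])
  have hrevA : chainD A.reverse = dA := chainD_reverse_s9 A
  have hrevT : chainD A.reverse.tail = dL := by
    rw [List.tail_reverse, chainD_reverse_s9]
  rw [hrevA, hrevT] at hmonor
  have hdApos : 0 < dA := lt_of_le_of_lt hmonor.1 hmonor.2
  have hdAspos : 0 < dAs := lt_of_le_of_lt hmonos.1 hmonos.2
  -- rational equation to integer equation
  have hq : (dAs' : ℚ) / dAs = ((dA : ℚ) - dL) / dA := by
    rw [inductance, inductance, hrevA, hrevT] at h
    rw [← hdAs', ← hdAs] at h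
    rw [h]
    field_simp
  have hz : dAs' * dA = (dA - dL) * dAs := by
    have h1 : (dA : ℚ) ≠ 0 := by exact_mod_cast hdApos.ne'
    have h2 : (dAs : ℚ) ≠ 0 := by exact_mod_cast hdAspos.ne'
    have := (div_eq_div_iff h2 h1).mp hq
    exact_mod_cast this
  -- coprimality
  have hcopAs : IsCoprime dAs dAs' := chainD_coprime As
  have hcopA : IsCoprime dA dL := by
    have := chainD_coprime A.reverse
    rwa [hrevA, hrevT] at this
  have hcopA' : IsCoprime dA (dA - dL) := by
    obtain ⟨u, v, huv⟩ := hcopA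
    exact ⟨u + v, -v, by ring_nf; linarith [huv]⟩
  -- dAs ∣ dA and dA ∣ dAs
  have d1 : dAs ∣ dA := by
    have : dAs ∣ dAs' * dA := ⟨dA - dL, by linarith [hz]⟩
    exact (hcopAs.dvd_of_dvd_mul_left this)
  have d2 : dA ∣ dAs := by
    have : dA ∣ (dA - dL) * dAs := ⟨dAs', by linarith [hz]⟩
    exact (hcopA'.dvd_of_dvd_mul_left this)
  have heq : dAs = dA := Int.dvd_antisymm hdAspos.le hdApos.le d1 d2
  rw [heq] at hz
  have : dAs' = dA - dL := by
    have := mul_right_cancel₀ hdApos.ne' hz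
    linarith [this]
  omega
end
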